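/- The limit as r → 0⁺ of c_r = (12/π²) ∫₀^{1/2} ( x(x^{r-1}+(1-x)^{r-1}) + (1-(1-x)^r)/(r x(1-x)) - (1-(1-x)^{r+1})/((r+1) x(1-x)) ) dx equals -(12/π²) ∫₀^{1/2} ln(1-x)/(x(1-x)) dx, and this value is 1. -/

import Mathlib

open Real Filter

open MeasureTheory intervalIntegral Set Topology


-- integrability of -log on [0,1/2]
lemma neglog_int : IntervalIntegrable (fun x : ℝ => -Real.log x) volume 0 (1/2) := by
  apply intervalIntegrable_deriv_of_nonneg (g := fun x => x - x * Real.log x)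
  · exact (continuous_id.sub Real.continuous_mul_log).continuousOn
  · intro x hx
    simp only [min_def, max_def] at hx
    norm_num at hx
    have hx0 : x ≠ 0 := ne_of_gt hx.1
    have : HasDerivAt (fun x : ℝ => x - x * Real.log x) (1 - (1 * Real.log x + x * x⁻¹)) x :=
      (hasDerivAt_id x).sub ((hasDerivAt_id x).mul (Real.hasDerivAt_log hx0))
    convert this using 1
    field_simp
    ring
  · intro x hx
    simp only [min_def, max_def] at hx
    norm_num at hx
    simp only [neg_nonneg]
    exact Real.log_nonpos hx.1.le (by linarith [hx.2])

-- -log(1-x) ≤ x/(1-x) for 0 < 1-x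
lemma neg_log_le {x : ℝ} (hx : x < 1) : -Real.log (1-x) ≤ x / (1-x) := by
  have h1 : (0:ℝ) < 1 - x := by linarith
  have := Real.log_le_sub_one_of_pos (x := (1-x)⁻¹) (by positivity)
  rw [Real.log_inv] at this
  have : -Real.log (1-x) ≤ (1-x)⁻¹ - 1 := this
  calc -Real.log (1-x) ≤ (1-x)⁻¹ - 1 := this
    _ = x / (1-x) := by field_simp; ring

lemma measA : Measurable (fun x : ℝ => Real.log (1-x) / x) := by
  exact (Real.measurable_log.comp (measurable_const.sub measurable_id)).div measurable_id

lemma hA_int : IntervalIntegrable (fun x : ℝ => Real.log (1-x) / x) volume 0 (1/2) := by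
  rw [intervalIntegrable_iff_integrableOn_Ioc_of_le (by norm_num)]
  apply (integrable_const (2:ℝ)).mono' measA.aestronglyMeasurable
  · filter_upwards [ae_restrict_mem measurableSet_Ioc] with x hx
    have hx0 := hx.1
    have hx2 := hx.2
    have h1 : (0:ℝ) < 1 - x := by linarith
    rw [Real.norm_eq_abs, abs_div, abs_of_pos hx0, abs_of_nonpos (Real.log_nonpos h1.le (by linarith))]
    rw [div_le_iff₀ hx0]
    have := neg_log_le (x := x) (by linarith)
    have h2 : x / (1-x) ≤ 2 * x := by
      rw [div_le_iff₀ h1]; nlinarith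
    linarith

lemma hB_int : IntervalIntegrable (fun x : ℝ => Real.log x / (1-x)) volume 0 (1/2) := by
  have hmeas : Measurable (fun x : ℝ => Real.log x / (1-x)) :=
    Real.measurable_log.div (measurable_const.sub measurable_id)
  rw [intervalIntegrable_iff_integrableOn_Ioc_of_le (by norm_num)]
  have h2 : IntegrableOn (fun x : ℝ => 2 * (-Real.log x)) (Ioc 0 (1/2)) volume := by
    have := (neglog_int.const_mul 2)
    rwa [intervalIntegrable_iff_integrableOn_Ioc_of_le (by norm_num)] at this
  apply h2.mono' hmeas.aestronglyMeasurable
  filter_upwards [ae_restrict_mem measurableSet_Ioc] with x hx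
  have hx0 := hx.1
  have hx2 := hx.2
  have h1 : (1:ℝ)/2 ≤ 1 - x := by linarith
  have hlog : Real.log x ≤ 0 := Real.log_nonpos hx0.le (by linarith)
  rw [Real.norm_eq_abs, abs_div, abs_of_nonpos hlog, abs_of_pos (by linarith : (0:ℝ) < 1 - x)]
  rw [div_le_iff₀ (by linarith : (0:ℝ) < 1 - x)]
  nlinarith [neg_nonneg.mpr hlog]

-- integrability of log(1-x) on [1/2, 1]
lemma hlog1sub_int : IntervalIntegrable (fun x : ℝ => -Real.log (1-x)) volume (1/2) 1 := by
  have := (neglog_int.comp_sub_left 1).symm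
  norm_num at this
  convert this using 1

lemma h_right_int : IntervalIntegrable (fun x : ℝ => Real.log (1-x) / x) volume (1/2) 1 := by
  have hmeas : Measurable (fun x : ℝ => Real.log (1-x) / x) :=
    (Real.measurable_log.comp (measurable_const.sub measurable_id)).div measurable_id
  rw [intervalIntegrable_iff_integrableOn_Ioc_of_le (by norm_num)]
  have h2 : IntegrableOn (fun x : ℝ => 2 * (-Real.log (1-x))) (Ioc (1/2) 1) volume := by
    have := (hlog1sub_int.const_mul 2)
    rwa [intervalIntegrable_iff_integrableOn_Ioc_of_le (by norm_num)] at this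
  apply h2.mono' hmeas.aestronglyMeasurable
  filter_upwards [ae_restrict_mem measurableSet_Ioc] with x hx
  have hx0 := hx.1
  have hx2 := hx.2
  have hlog : Real.log (1-x) ≤ 0 := Real.log_nonpos (by linarith) (by linarith)
  rw [Real.norm_eq_abs, abs_div, abs_of_nonpos hlog, abs_of_pos (by linarith : (0:ℝ) < x)]
  rw [div_le_iff₀ (by linarith : (0:ℝ) < x)]
  nlinarith [neg_nonneg.mpr hlog]

lemma sum_inv_sq_succ : HasSum (fun n : ℕ => (1:ℝ) / ((n:ℝ)+1) ^ 2) (π^2/6) := by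
  have h := hasSum_zeta_two
  rw [← hasSum_nat_add_iff' 1] at h
  simpa using h

lemma key_series : ∫ x in Ioo (0:ℝ) 1, Real.log (1-x) / x = -(π^2/6) := by
  set μ := volume.restrict (Ioo (0:ℝ) 1) with hμ
  have hF_int : ∀ n : ℕ, Integrable (fun x : ℝ => x ^ n / ((n:ℝ)+1)) μ := by
    intro n
    have : IntegrableOn (fun x : ℝ => x ^ n / ((n:ℝ)+1)) (Icc (0:ℝ) 1) volume :=
      (Continuous.integrableOn_Icc (by continuity))
    exact this.mono_set Ioo_subset_Icc_self
  have hval : ∀ n : ℕ, ∫ x, ‖x ^ n / ((n:ℝ)+1)‖ ∂μ = 1 / ((n:ℝ)+1)^2 := by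
    intro n
    have hn : ((n:ℝ)+1) ≠ 0 := by positivity
    have h1 : ∫ x, ‖x ^ n / ((n:ℝ)+1)‖ ∂μ = ∫ x in Ioo (0:ℝ) 1, x ^ n / ((n:ℝ)+1) := by
      apply setIntegral_congr_fun measurableSet_Ioo
      intro x hx
      show ‖x ^ n / ((n:ℝ)+1)‖ = x ^ n / ((n:ℝ)+1)
      rw [Real.norm_eq_abs, abs_of_nonneg (div_nonneg (pow_nonneg hx.1.le n) (by positivity))]
    rw [h1, ← integral_Ioc_eq_integral_Ioo, ← intervalIntegral.integral_of_le (by norm_num : (0:ℝ) ≤ 1)]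
    rw [intervalIntegral.integral_div, integral_pow]
    field_simp
    ring
  have hF_sum : Summable fun n : ℕ => ∫ x, ‖x ^ n / ((n:ℝ)+1)‖ ∂μ := by
    simp_rw [hval]
    exact sum_inv_sq_succ.summable
  have h := MeasureTheory.integral_tsum_of_summable_integral_norm hF_int hF_sum
  have hpt : ∀ x ∈ Ioo (0:ℝ) 1, ∑' n : ℕ, x ^ n / ((n:ℝ)+1) = -(Real.log (1-x) / x) := by
    intro x hx
    have hs := Real.hasSum_pow_div_log_of_abs_lt_one (x := x) (by rw [abs_of_pos hx.1]; exact hx.2)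
    have hx0 : x ≠ 0 := ne_of_gt hx.1
    have hs3 := hs.mul_left x⁻¹
    have he : (fun n : ℕ => x⁻¹ * (x ^ (n+1) / ((n:ℝ)+1))) = fun n : ℕ => x ^ n / ((n:ℝ)+1) := by
      funext n
      rw [pow_succ]
      field_simp
    rw [he] at hs3
    rw [hs3.tsum_eq]
    field_simp
  have hL : ∫ x, (∑' n : ℕ, x ^ n / ((n:ℝ)+1)) ∂μ = ∫ x, -(Real.log (1-x) / x) ∂μ := by
    exact setIntegral_congr_fun measurableSet_Ioo hpt
  have hsumval : ∑' n : ℕ, ∫ x, x ^ n / ((n:ℝ)+1) ∂μ = π^2/6 := by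
    have heq : ∀ n : ℕ, ∫ x, x ^ n / ((n:ℝ)+1) ∂μ = 1/((n:ℝ)+1)^2 := by
      intro n
      rw [← hval n]
      apply setIntegral_congr_fun measurableSet_Ioo
      intro x hx
      show x ^ n / ((n:ℝ)+1) = ‖x ^ n / ((n:ℝ)+1)‖
      rw [Real.norm_eq_abs, abs_of_nonneg (div_nonneg (pow_nonneg hx.1.le n) (by positivity))]
    simp_rw [heq]
    exact sum_inv_sq_succ.tsum_eq
  rw [h, hL, MeasureTheory.integral_neg] at hsumval
  linarith

-- B = ∫_{1/2}^1 log(1-x)/x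
lemma hB_eq : ∫ x in (0:ℝ)..(1/2), Real.log x / (1-x)
    = ∫ x in (1/2:ℝ)..1, Real.log (1-x) / x := by
  have := intervalIntegral.integral_comp_sub_left (a := (0:ℝ)) (b := 1/2)
    (fun u : ℝ => Real.log (1-u) / u) 1
  norm_num at this
  convert this using 2 with x

-- A + B = -(π²/6)
lemma hApB : (∫ x in (0:ℝ)..(1/2), Real.log (1-x) / x)
    + (∫ x in (0:ℝ)..(1/2), Real.log x / (1-x)) = -(π^2/6) := by
  rw [hB_eq]
  rw [intervalIntegral.integral_add_adjacent_intervals hA_int h_right_int]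
  rw [intervalIntegral.integral_of_le (by norm_num : (0:ℝ) ≤ 1),
    integral_Ioc_eq_integral_Ioo]
  exact key_series

-- limit of log x * log(1-x) at 0+
lemma tendsto_corner : Tendsto (fun x : ℝ => Real.log x * Real.log (1-x))
    (nhdsWithin 0 (Ioi 0)) (nhds 0) := by
  have h1 : Tendsto (fun x : ℝ => x * Real.log x) (nhdsWithin 0 (Ioi 0)) (nhds 0) := by
    have := Real.continuous_mul_log.tendsto 0
    simpa using this.mono_left nhdsWithin_le_nhds
  have h2 : Tendsto (fun x : ℝ => Real.log (1-x) / x) (nhdsWithin 0 (Ioi 0)) (nhds (-1)) := by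
    have hd : HasDerivAt (fun x : ℝ => Real.log (1-x)) (-1) 0 := by
      have := ((Real.hasDerivAt_log (by norm_num : (1:ℝ) - 0 ≠ 0)).comp 0
        ((hasDerivAt_id (0:ℝ)).const_sub 1))
      norm_num at this
      exact this
    have := hasDerivAt_iff_tendsto_slope.mp hd
    have h3 := this.mono_left (nhdsWithin_mono 0 (fun x hx => ne_of_gt hx : Ioi (0:ℝ) ⊆ {0}ᶜ))
    apply h3.congr
    intro x
    simp [slope_def_field, Real.log_one]
  have := h1.mul h2
  norm_num at this
  apply this.congr'
  filter_upwards [self_mem_nhdsWithin] with x hx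
  have hx0 : x ≠ 0 := ne_of_gt hx
  field_simp

-- A - B = (log 2)^2
lemma hAmB : (∫ x in (0:ℝ)..(1/2), Real.log (1-x) / x)
    - (∫ x in (0:ℝ)..(1/2), Real.log x / (1-x)) = (Real.log 2)^2 := by
  have hsub := (hA_int.sub hB_int)
  rw [← intervalIntegral.integral_sub hA_int hB_int]
  have := intervalIntegral.integral_eq_sub_of_hasDerivAt_of_tendsto
    (f := fun x : ℝ => Real.log x * Real.log (1-x))
    (f' := fun x : ℝ => Real.log (1-x) / x - Real.log x / (1-x))
    (a := 0) (b := 1/2) (by norm_num)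
    (fun x hx => by
      have hx0 : x ≠ 0 := ne_of_gt hx.1
      have hx1 : (1:ℝ) - x ≠ 0 := by
        have := hx.2; intro h; simp at hx ⊢; nlinarith
      have h1 : HasDerivAt Real.log x⁻¹ x := Real.hasDerivAt_log hx0
      have h2 : HasDerivAt (fun x : ℝ => Real.log (1-x)) (-(1-x)⁻¹) x := by
        have := ((Real.hasDerivAt_log hx1).comp x ((hasDerivAt_id x).const_sub 1))
        exact this.congr_deriv (by ring)
      have := h1.mul h2
      refine this.congr_deriv ?_
      field_simp
      ring)
    hsub
    (by
      have := tendsto_corner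
      exact this)
    (by
      have hc : ContinuousAt (fun x : ℝ => Real.log x * Real.log (1-x)) (1/2) := by
        apply ContinuousAt.mul
        · exact (Real.continuousAt_log (by norm_num)).comp (continuousAt_id)
        · exact (Real.continuousAt_log (by norm_num)).comp
            ((continuousAt_const).sub continuousAt_id)
      exact (hc.tendsto).mono_left nhdsWithin_le_nhds)
  rw [this]
  norm_num
  rw [Real.log_div (by norm_num) (by norm_num)]
  simp [Real.log_one]
  ring

lemma hC_cont : ContinuousOn (fun x : ℝ => Real.log (1-x) / (1-x)) (Icc (0:ℝ) (1/2)) := by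
  apply ContinuousOn.div
  · apply (Real.continuousOn_log.comp (continuous_const.sub continuous_id).continuousOn)
    intro x hx
    simp at hx ⊢
    intro h; nlinarith [hx.2]
  · exact (continuous_const.sub continuous_id).continuousOn
  · intro x hx
    simp at hx ⊢
    intro h; nlinarith [hx.2]

lemma hC_int : IntervalIntegrable (fun x : ℝ => Real.log (1-x) / (1-x)) volume 0 (1/2) := by
  apply ContinuousOn.intervalIntegrable
  rw [uIcc_of_le (by norm_num)]
  exact hC_cont

lemma hC_val : ∫ x in (0:ℝ)..(1/2), Real.log (1-x) / (1-x) = -(Real.log 2)^2/2 := by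
  have := intervalIntegral.integral_eq_sub_of_hasDerivAt
    (f := fun x : ℝ => -(Real.log (1-x))^2/2)
    (f' := fun x : ℝ => Real.log (1-x) / (1-x))
    (a := 0) (b := 1/2)
    (fun x hx => by
      rw [uIcc_of_le (by norm_num)] at hx
      have hx1 : (1:ℝ) - x ≠ 0 := by
        have := hx.2; intro h; simp at hx; nlinarith [hx.2]
      have h2 : HasDerivAt (fun x : ℝ => Real.log (1-x)) (-(1-x)⁻¹) x := by
        have := ((Real.hasDerivAt_log hx1).comp x ((hasDerivAt_id x).const_sub 1))
        exact this.congr_deriv (by ring)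
      have h3 := ((h2.pow 2).neg.div_const 2)
      refine h3.congr_deriv ?_
      field_simp
      ring)
    hC_int
  rw [this]
  norm_num
  rw [Real.log_div (by norm_num) (by norm_num)]
  simp [Real.log_one]

-- split J
lemma hJ_split : ∫ x in (0:ℝ)..(1/2), Real.log (1-x) / (x * (1-x))
    = (∫ x in (0:ℝ)..(1/2), Real.log (1-x) / x)
      + ∫ x in (0:ℝ)..(1/2), Real.log (1-x) / (1-x) := by
  rw [← intervalIntegral.integral_add hA_int hC_int]
  apply intervalIntegral.integral_congr
  intro x hx
  rw [uIcc_of_le (by norm_num)] at hx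
  rcases eq_or_lt_of_le hx.1 with h | h
  · simp [← h]
  · have hx1 : (1:ℝ) - x ≠ 0 := by
      have := hx.2; intro hh; nlinarith
    have hx0 : x ≠ 0 := ne_of_gt h
    field_simp
    ring

lemma hJ_val : ∫ x in (0:ℝ)..(1/2), Real.log (1-x) / (x * (1-x)) = -(π^2/12) := by
  rw [hJ_split, hC_val]
  nlinarith [hApB, hAmB]

noncomputable def Fint (r : ℝ) (x : ℝ) : ℝ :=
  x * (x ^ (r - 1) + (1 - x) ^ (r - 1))
    + (1 - (1 - x) ^ r) / (r * x * (1 - x))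
    - (1 - (1 - x) ^ (r + 1)) / ((r + 1) * x * (1 - x))

lemma Fbound {r x : ℝ} (hr : r ∈ Ioc (0:ℝ) 1) (hx : x ∈ Ioc (0:ℝ) (1/2)) :
    ‖Fint r x‖ ≤ 12 := by
  obtain ⟨hr0, hr1⟩ := hr
  obtain ⟨hx0, hx2⟩ := hx
  have h1x : (0:ℝ) < 1 - x := by linarith
  have h1x2 : (1:ℝ)/2 ≤ 1 - x := by linarith
  have h1x1 : (1:ℝ) - x ≤ 1 := by linarith
  set L : ℝ := -Real.log (1-x) with hL
  have hLnn : 0 ≤ L := by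
    rw [hL, neg_nonneg]
    exact Real.log_nonpos h1x.le h1x1
  have hLle : L ≤ x / (1-x) := neg_log_le (by linarith)
  have hLle' : L * (1-x) ≤ x := by
    rw [div_eq_mul_inv] at hLle
    calc L * (1-x) ≤ (x * (1-x)⁻¹) * (1-x) := by nlinarith
      _ = x := by field_simp
  -- t1
  have ht1 : x * x ^ (r-1) = x ^ r := by
    rw [mul_comm, ← Real.rpow_add_one (ne_of_gt hx0) (r-1)]
    norm_num
  have ht1b : (0:ℝ) ≤ x ^ r ∧ x ^ r ≤ 1 :=
    ⟨Real.rpow_nonneg hx0.le r, Real.rpow_le_one hx0.le (by linarith) hr0.le⟩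
  -- t2
  have ht2b : (0:ℝ) ≤ x * (1-x) ^ (r-1) ∧ x * (1-x) ^ (r-1) ≤ 1 := by
    constructor
    · exact mul_nonneg hx0.le (Real.rpow_nonneg h1x.le _)
    · have h1 : (1-x) ^ (r-1) ≤ (1-x) ^ (-1:ℝ) :=
        Real.rpow_le_rpow_of_exponent_ge h1x h1x1 (by linarith)
      have h2 : (1-x) ^ (-1:ℝ) = (1-x)⁻¹ := Real.rpow_neg_one _
      have h3 : (1-x)⁻¹ ≤ 2 := by
        rw [inv_le_comm₀ h1x (by norm_num)]
        linarith
      nlinarith [Real.rpow_nonneg h1x.le (r-1)]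
  -- general estimate for the exp-type numerators
  have hnum : ∀ s : ℝ, 0 < s → (0 ≤ 1 - (1-x) ^ s ∧ 1 - (1-x) ^ s ≤ s * L) := by
    intro s hs
    constructor
    · have := Real.rpow_le_one h1x.le h1x1 hs.le
      linarith
    · rw [Real.rpow_def_of_pos h1x]
      have := Real.add_one_le_exp (Real.log (1-x) * s)
      have hLs : Real.log (1-x) * s = -(s*L) := by rw [hL]; ring
      rw [hLs] at this ⊢
      linarith
  have hfrac : ∀ s : ℝ, 0 < s → (0 ≤ (1 - (1-x)^s) / (s * x * (1-x)) ∧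
      (1 - (1-x)^s) / (s * x * (1-x)) ≤ 4) := by
    intro s hs
    have hd : (0:ℝ) < s * x * (1-x) := by positivity
    obtain ⟨hn0, hn1⟩ := hnum s hs
    constructor
    · exact div_nonneg hn0 hd.le
    · rw [div_le_iff₀ hd]
      have e0 : s * L * (1/2) ≤ s * L * (1-x) :=
        mul_le_mul_of_nonneg_left h1x2 (mul_nonneg hs.le hLnn)
      have e1 : s * (L * (1-x)) ≤ s * x := mul_le_mul_of_nonneg_left hLle' hs.le
      have e2 : 2 * (s*x) ≤ 4 * (s * x * (1-x)) := by nlinarith [mul_pos hs hx0]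
      nlinarith
  have ht3b := hfrac r hr0
  have ht4b := hfrac (r+1) (by linarith)
  rw [Real.norm_eq_abs, abs_le]
  unfold Fint
  constructor
  · nlinarith [ht1b.1, ht2b.1, ht3b.1, ht4b.2, ht1, Real.rpow_nonneg hx0.le (r-1),
      mul_nonneg hx0.le (Real.rpow_nonneg hx0.le (r-1))]
  · nlinarith [ht1b.2, ht2b.2, ht3b.2, ht4b.1, ht1]

lemma Ftendsto {x : ℝ} (hx : x ∈ Ioc (0:ℝ) (1/2)) :
    Tendsto (fun r => Fint r x) (nhdsWithin 0 (Ioi 0))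
      (nhds (-(Real.log (1-x) / (x * (1-x))))) := by
  obtain ⟨hx0, hx2⟩ := hx
  have h1x : (0:ℝ) < 1 - x := by linarith
  set l : ℝ := Real.log (1-x) with hl
  -- T1 : x * x^(r-1) → x * x^(-1)
  have hT1 : Tendsto (fun r : ℝ => x * x ^ (r-1)) (nhdsWithin 0 (Ioi 0))
      (nhds (x * x ^ ((-1:ℝ)))) := by
    rw [show x ^ ((-1:ℝ)) = Real.exp (Real.log x * (-1)) from Real.rpow_def_of_pos hx0 _]
    have hc : Continuous fun r : ℝ => x * Real.exp (Real.log x * (r-1)) := by continuity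
    have := (hc.tendsto 0).mono_left (nhdsWithin_le_nhds (s := Ioi (0:ℝ)))
    simp only [zero_sub] at this
    exact this.congr (fun r => by rw [Real.rpow_def_of_pos hx0])
  have hT2 : Tendsto (fun r : ℝ => x * (1-x) ^ (r-1)) (nhdsWithin 0 (Ioi 0))
      (nhds (x * (1-x) ^ ((-1:ℝ)))) := by
    rw [show (1-x) ^ ((-1:ℝ)) = Real.exp (Real.log (1-x) * (-1)) from Real.rpow_def_of_pos h1x _]
    have hc : Continuous fun r : ℝ => x * Real.exp (Real.log (1-x) * (r-1)) := by continuity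
    have := (hc.tendsto 0).mono_left (nhdsWithin_le_nhds (s := Ioi (0:ℝ)))
    simp only [zero_sub] at this
    exact this.congr (fun r => by rw [Real.rpow_def_of_pos h1x])
  -- T3
  have hT3 : Tendsto (fun r : ℝ => (1 - (1-x) ^ r) / (r * x * (1-x)))
      (nhdsWithin 0 (Ioi 0)) (nhds (-l * (x * (1-x))⁻¹)) := by
    have hd : HasDerivAt (fun r : ℝ => Real.exp (l * r)) l 0 := by
      have h0 := (Real.hasDerivAt_exp (l * 0)).comp 0 ((hasDerivAt_id (0:ℝ)).const_mul l)
      simp at h0; exact h0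
    have hs := hasDerivAt_iff_tendsto_slope.mp hd
    have hs2 := hs.mono_left (nhdsWithin_mono 0 (fun y hy => ne_of_gt hy : Ioi (0:ℝ) ⊆ {0}ᶜ))
    have hs3 := (hs2.neg).mul_const ((x * (1-x))⁻¹)
    apply hs3.congr'
    filter_upwards [self_mem_nhdsWithin] with r hr
    have hr0 : r ≠ 0 := ne_of_gt hr
    have hxne : x ≠ 0 := ne_of_gt hx0
    have h1xne : (1:ℝ) - x ≠ 0 := ne_of_gt h1x
    rw [slope_def_field]
    rw [Real.rpow_def_of_pos h1x, mul_comm (Real.log (1-x)) r, ← hl]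
    simp only [mul_zero, Real.exp_zero, sub_zero]
    field_simp
    ring
  -- T4
  have hT4 : Tendsto (fun r : ℝ => (1 - (1-x) ^ (r+1)) / ((r+1) * x * (1-x)))
      (nhdsWithin 0 (Ioi 0)) (nhds (x / (x * (1-x)))) := by
    have hnum : Tendsto (fun r : ℝ => 1 - Real.exp (l * (r+1))) (nhds 0)
        (nhds (1 - Real.exp (l * 1))) := by
      have hc : Continuous fun r : ℝ => 1 - Real.exp (l * (r+1)) := by continuity
      have := hc.tendsto 0
      simpa using this
    have hden : Tendsto (fun r : ℝ => (r+1) * x * (1-x)) (nhds 0)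
        (nhds (1 * x * (1-x))) := by
      have hc : Continuous fun r : ℝ => (r+1) * x * (1-x) := by continuity
      have := hc.tendsto 0
      simpa using this
    have hd0 : (1:ℝ) * x * (1-x) ≠ 0 := by positivity
    have := (hnum.div hden hd0).mono_left (nhdsWithin_le_nhds (s := Ioi (0:ℝ)))
    have heq : (1 - Real.exp (l * 1)) / (1 * x * (1-x)) = x / (x * (1-x)) := by
      rw [mul_one, hl, Real.exp_log h1x]
      ring_nf
    rw [heq] at this
    apply this.congr
    intro r
    simp only [Pi.div_apply]
    rw [Real.rpow_def_of_pos h1x]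
  have hsum := ((hT1.add hT2).add hT3).sub hT4
  have hfin : x * x ^ ((-1:ℝ)) + x * (1-x) ^ ((-1:ℝ)) + (-l * (x * (1-x))⁻¹) - x / (x * (1-x))
      = -(l / (x * (1-x))) := by
    rw [Real.rpow_neg_one, Real.rpow_neg_one]
    field_simp
    ring
  rw [hfin] at hsum
  apply hsum.congr
  intro r
  unfold Fint
  ring

lemma Fmeas (r : ℝ) : AEStronglyMeasurable (Fint r)
    (volume.restrict (Set.uIoc (0:ℝ) (1/2))) := by
  apply Measurable.aestronglyMeasurable
  unfold Fint
  have h1 : Measurable fun x : ℝ => x ^ (r-1) := measurable_id.pow measurable_const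
  have hsub : Measurable fun x : ℝ => 1 - x := measurable_const.sub measurable_id
  have h2 : Measurable fun x : ℝ => (1-x) ^ (r-1) := (measurable_id.pow measurable_const).comp hsub
  have h3 : Measurable fun x : ℝ => (1-x) ^ r := (measurable_id.pow measurable_const).comp hsub
  have h4 : Measurable fun x : ℝ => (1-x) ^ (r+1) := (measurable_id.pow measurable_const).comp hsub
  exact ((measurable_id.mul (h1.add h2)).add
    (((measurable_const.sub h3)).div ((measurable_const.mul measurable_id).mul hsub))).sub
    ((measurable_const.sub h4).div ((measurable_const.mul measurable_id).mul hsub))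

/-- The constant `c_r` of Theorem 1.1. -/
noncomputable def cConst (r : ℝ) : ℝ :=
  (12 / π ^ 2) *
    ∫ x in (0 : ℝ)..(1 / 2),
      (x * (x ^ (r - 1) + (1 - x) ^ (r - 1))
        + (1 - (1 - x) ^ r) / (r * x * (1 - x))
        - (1 - (1 - x) ^ (r + 1)) / ((r + 1) * x * (1 - x)))

theorem tendsto_cConst_zero :
    Tendsto cConst (nhdsWithin 0 (Set.Ioi 0))
      (nhds (-(12 / π ^ 2) * ∫ x in (0 : ℝ)..(1 / 2), Real.log (1 - x) / (x * (1 - x)))) ∧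
    -(12 / π ^ 2) * (∫ x in (0 : ℝ)..(1 / 2), Real.log (1 - x) / (x * (1 - x))) = 1 := by
  constructor
  · have hmain : Tendsto (fun r => ∫ x in (0:ℝ)..(1/2), Fint r x) (nhdsWithin 0 (Ioi 0))
        (nhds (∫ x in (0:ℝ)..(1/2), -(Real.log (1-x) / (x * (1-x))))) := by
      apply intervalIntegral.tendsto_integral_filter_of_dominated_convergence
        (bound := fun _ => 12)
      · exact Eventually.of_forall Fmeas
      · filter_upwards [Ioc_mem_nhdsGT_of_mem (by norm_num : (0:ℝ) ∈ Ico (0:ℝ) 1)] with r hr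
        apply ae_of_all
        intro x hx
        rw [uIoc_of_le (by norm_num : (0:ℝ) ≤ 1/2)] at hx
        exact Fbound hr hx
      · exact intervalIntegrable_const
      · apply ae_of_all
        intro x hx
        rw [uIoc_of_le (by norm_num : (0:ℝ) ≤ 1/2)] at hx
        exact Ftendsto hx
    have heq : -(12 / π ^ 2) * ∫ x in (0:ℝ)..(1/2), Real.log (1-x) / (x * (1-x))
        = (12 / π ^ 2) * ∫ x in (0:ℝ)..(1/2), -(Real.log (1-x) / (x * (1-x))) := by
      rw [intervalIntegral.integral_neg]
      ring
    rw [heq]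
    have := hmain.const_mul (12 / π ^ 2)
    exact this.congr (fun r => rfl)
  · rw [hJ_val]
    have hπ := Real.pi_ne_zero
    field_simp
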